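/- For every fixed integer d ≥ 1, there is a protocol with exactly 2(d+2) states in which a designated node u (initially in state q₀, all others in state a₀, all edges inactive) stabilizes to having exactly 2^d active neighbors: u first activates edges to 2 nodes placing them in state a₁, and thereafter each interaction of u with an a_i-neighbor (i < d) over an active edge converts it to a_{i+1} and causes u to recruit one new a_{i+1} neighbor, doubling the count of level-(i+1) neighbors until all 2^d neighbors are in state a_d. -/

import Mathlib

/-- A network constructor (NET) protocol: an initial node-state and a transition
function taking the states of two interacting nodes and of the edge joining them
to their updated states. -/
structure NET (Q : Type) where
  init : Q
  rule : Q → Q → Bool → Q × Q × Bool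

namespace NET

variable {Q : Type}

/-- A configuration on `n` nodes: a node-state for every node and a (symmetrically
stored) Boolean edge-state for every pair of nodes. -/
def Config (Q : Type) (n : ℕ) : Type := (Fin n → Q) × (Fin n → Fin n → Bool)

/-- One interaction step: the scheduled ordered pair `(u, v)` (if `u ≠ v`) updates
its node-states and the state of the edge `uv` according to the protocol's rule. -/
def step (P : NET Q) {n : ℕ} (C : Config Q n) (u v : Fin n) : Config Q n :=
  if u = v then C
  else
    let r := P.rule (C.1 u) (C.1 v) (C.2 u v || C.2 v u)
    ⟨fun w => if w = u then r.1 else if w = v then r.2.1 else C.1 w,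
     fun w x => if (w = u ∧ x = v) ∨ (w = v ∧ x = u) then r.2.2 else C.2 w x⟩

/-- The execution of protocol `P` from configuration `C0` under schedule `sched`. -/
def run (P : NET Q) {n : ℕ} (C0 : Config Q n) (sched : ℕ → Fin n × Fin n) : ℕ → Config Q n
  | 0 => C0
  | t + 1 => P.step (P.run C0 sched t) (sched t).1 (sched t).2

/-- The initial configuration: every node in the initial state, every edge inactive. -/
def initC (P : NET Q) (n : ℕ) : Config Q n := ⟨fun _ => P.init, fun _ _ => false⟩

/-- Two distinct nodes are adjacent when the edge joining them is active. -/
def adj {n : ℕ} (C : Config Q n) (u v : Fin n) : Prop :=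
  u ≠ v ∧ (C.2 u v = true ∨ C.2 v u = true)

open Classical in
/-- The active degree of a node. -/
noncomputable def deg {n : ℕ} (C : Config Q n) (u : Fin n) : ℕ :=
  (Finset.univ.filter (fun v => adj C u v)).card

/-- The active (output) network is connected. -/
def ConnectedCfg {n : ℕ} (C : Config Q n) : Prop :=
  ∀ u v : Fin n, Relation.ReflTransGen (adj C) u v

/-- The active network is a spanning line: connected, with exactly 2 nodes of
active degree 1 and all remaining nodes of active degree 2. -/
def IsSpanningLine {n : ℕ} (C : Config Q n) : Prop :=
  ConnectedCfg C ∧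
    (Finset.univ.filter (fun v => deg C v = 1)).card = 2 ∧
    ∀ v : Fin n, deg C v = 1 ∨ deg C v = 2

/-- The active network is a spanning ring: connected and every node has degree 2. -/
def IsSpanningRing {n : ℕ} (C : Config Q n) : Prop :=
  ConnectedCfg C ∧ ∀ v : Fin n, deg C v = 2

/-- The active network is a spanning star centered at some node. -/
def IsSpanningStar {n : ℕ} (C : Config Q n) : Prop :=
  ∃ ctr : Fin n, (∀ v : Fin n, adj C ctr v ↔ v ≠ ctr) ∧
    ∀ u v : Fin n, adj C u v → u = ctr ∨ v = ctr

/-- The output (active) network never changes from time `t` on. -/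
def outputStableAt (P : NET Q) {n : ℕ} (C0 : Config Q n) (sched : ℕ → Fin n × Fin n)
    (t : ℕ) : Prop :=
  ∀ t', t ≤ t' → ∀ u v : Fin n,
    adj (P.run C0 sched t') u v ↔ adj (P.run C0 sched t) u v

/-- The running time: the first moment from which the output network stays unchanged. -/
noncomputable def runtime (P : NET Q) {n : ℕ} (C0 : Config Q n)
    (sched : ℕ → Fin n × Fin n) : ℕ :=
  sInf {t | P.outputStableAt C0 sched t}

/-- A schedule is fair if every ordered pair of distinct nodes occurs infinitely often. -/
def Fair {n : ℕ} (sched : ℕ → Fin n × Fin n) : Prop :=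
  ∀ p : Fin n × Fin n, p.1 ≠ p.2 → ∀ t, ∃ k, t ≤ k ∧ sched k = p
end NET
namespace NETProof

open NET Finset

abbrev QQ (d : ℕ) := Fin (d+2) ⊕ Fin (d+2)

def rule (d : ℕ) : QQ d → QQ d → Bool → QQ d × QQ d × Bool
  | .inl s, .inr i, b =>
      if _h1 : s.val = 0 ∧ i.val = 0 ∧ b = false then
        (.inl ⟨1, by omega⟩, .inr ⟨1, by omega⟩, true)
      else if _h2 : s.val = 1 ∧ i.val = 0 ∧ b = false then
        (.inl ⟨d+1, by omega⟩, .inr ⟨1, by omega⟩, true)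
      else if h3 : s.val = d+1 ∧ 1 ≤ i.val ∧ i.val + 1 ≤ d ∧ b = true then
        (.inl ⟨i.val+1, by obtain ⟨-, -, h, -⟩ := h3; omega⟩,
         .inr ⟨i.val+1, by obtain ⟨-, -, h, -⟩ := h3; omega⟩, true)
      else if _h4 : 2 ≤ s.val ∧ s.val ≤ d ∧ i.val = 0 ∧ b = false then
        (.inl ⟨d+1, by omega⟩, .inr s, true)
      else (.inl s, .inr i, b)
  | x, y, b => (x, y, b)

def P (d : ℕ) : NET (QQ d) := ⟨.inr ⟨0, by omega⟩, rule d⟩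

def lvl {d n : ℕ} (C : Config (QQ d) n) (v : Fin n) : ℕ :=
  match C.1 v with
  | .inl _ => 0
  | .inr i => i.val

def pw (d i : ℕ) : ℕ := if i = 0 then 0 else 2^(d-i)
def mw (d i : ℕ) : ℕ := if i = 0 then d+1 else d - i
def target (d s : ℕ) : ℕ :=
  if s = 0 then 0 else if s = 1 then 2^(d-1) else if s = d+1 then 2^d else 2^d - 2^(d-s)

def Phi {d n : ℕ} (C : Config (QQ d) n) : ℕ := ∑ v, pw d (lvl C v)
def Mz {d n : ℕ} (C : Config (QQ d) n) : ℕ := ∑ v, mw d (lvl C v)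

structure Inv (d : ℕ) {n : ℕ} (u0 : Fin n) (C : Config (QQ d) n) : Prop where
  ctrl : ∃ s : Fin (d+2), C.1 u0 = .inl s ∧ Phi C = target d s.val
  agents : ∀ v, v ≠ u0 → ∃ i : Fin (d+2), C.1 v = .inr i ∧ i.val ≤ d
  esymm : ∀ u v, C.2 u v = C.2 v u
  edge0 : ∀ v, v ≠ u0 → (C.2 u0 v = true ↔ lvl C v ≠ 0)
  ediag : C.2 u0 u0 = false
  erest : ∀ u v, u ≠ u0 → v ≠ u0 → C.2 u v = false

lemma lvl_inl {d n : ℕ} {C : Config (QQ d) n} {v : Fin n} {s : Fin (d+2)}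
    (h : C.1 v = .inl s) : lvl C v = 0 := by simp [lvl, h]

lemma lvl_inr {d n : ℕ} {C : Config (QQ d) n} {v : Fin n} {i : Fin (d+2)}
    (h : C.1 v = .inr i) : lvl C v = i.val := by simp [lvl, h]

lemma lvl_u0 {d n : ℕ} {u0 : Fin n} {C : Config (QQ d) n} (h : Inv d u0 C) :
    lvl C u0 = 0 := by
  obtain ⟨s, hs, -⟩ := h.ctrl; exact lvl_inl hs

lemma sum_update_aux {n : ℕ} (f : Fin n → ℕ) (v : Fin n) (a : ℕ) (g : ℕ → ℕ) :
    (∑ w, g (Function.update f v a w)) + g (f v) = (∑ w, g (f w)) + g a := by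
  classical
  have h1 : ∑ w, g (Function.update f v a w)
      = (∑ w ∈ Finset.univ.erase v, g (f w)) + g a := by
    rw [← Finset.sum_erase_add _ _ (Finset.mem_univ v)]
    congr 1
    · exact Finset.sum_congr rfl fun w hw => by
        rw [Function.update_of_ne (Finset.ne_of_mem_erase hw)]
    · rw [Function.update_self]
  have h2 : ∑ w, g (f w) = (∑ w ∈ Finset.univ.erase v, g (f w)) + g (f v) :=
    (Finset.sum_erase_add _ _ (Finset.mem_univ v)).symm
  omega

end NETProof
namespace NETProof

open NET Finset

def upd {d n : ℕ} (C : Config (QQ d) n) (u v : Fin n) (s' i' : Fin (d+2)) :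
    Config (QQ d) n :=
  ⟨fun w => if w = u then .inl s' else if w = v then .inr i' else C.1 w,
   fun w x => if (w = u ∧ x = v) ∨ (w = v ∧ x = u) then true else C.2 w x⟩

lemma step_eq_upd {d n : ℕ} (C : Config (QQ d) n) (u v : Fin n) (huv : u ≠ v)
    (s' i' : Fin (d+2))
    (hr : rule d (C.1 u) (C.1 v) (C.2 u v || C.2 v u) = (.inl s', .inr i', true)) :
    (P d).step C u v = upd C u v s' i' := by
  have : (P d).rule = rule d := rfl
  simp only [NET.step, if_neg huv, this, hr, upd]
  exact if_neg huv

lemma step_id {d n : ℕ} (C : Config (QQ d) n) (u v : Fin n)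
    (hs : ∀ a b, C.2 a b = C.2 b a)
    (hr : rule d (C.1 u) (C.1 v) (C.2 u v || C.2 v u)
        = (C.1 u, C.1 v, C.2 u v || C.2 v u)) :
    (P d).step C u v = C := by
  by_cases huv : u = v
  · simp [NET.step, huv]
  · have hP : (P d).rule = rule d := rfl
    simp only [NET.step, if_neg huv, hP, hr]
    refine (if_neg huv).trans ?_
    refine Prod.ext ?_ ?_
    · funext w
      dsimp only
      by_cases h1 : w = u
      · rw [if_pos h1, h1]
      · rw [if_neg h1]
        by_cases h2 : w = v
        · rw [if_pos h2, h2]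
        · rw [if_neg h2]
    · funext w x
      dsimp only
      by_cases hc : (w = u ∧ x = v) ∨ (w = v ∧ x = u)
      · rw [if_pos hc]
        rcases hc with ⟨h1, h2⟩ | ⟨h1, h2⟩
        · rw [h1, h2, ← hs u v, Bool.or_self]
        · rw [h1, h2, hs u v, Bool.or_self]
      · rw [if_neg hc]

end NETProof
namespace NETProof

open NET Finset

lemma upd_fst_u {d n : ℕ} (C : Config (QQ d) n) (u v : Fin n) (huv : u ≠ v)
    (s' i' : Fin (d+2)) : (upd C u v s' i').1 u = .inl s' := by
  simp [upd]

lemma upd_fst_v {d n : ℕ} (C : Config (QQ d) n) (u v : Fin n) (huv : u ≠ v)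
    (s' i' : Fin (d+2)) : (upd C u v s' i').1 v = .inr i' := by
  simp [upd, Ne.symm huv]

lemma upd_fst_other {d n : ℕ} (C : Config (QQ d) n) (u v w : Fin n)
    (hu : w ≠ u) (hv : w ≠ v) (s' i' : Fin (d+2)) :
    (upd C u v s' i').1 w = C.1 w := by
  simp [upd, hu, hv]

lemma upd_lvl {d n : ℕ} (C : Config (QQ d) n) (u v : Fin n) (huv : u ≠ v)
    (s' i' : Fin (d+2)) (hu0 : lvl C u = 0) :
    lvl (upd C u v s' i') = Function.update (lvl C) v i'.val := by
  funext w
  by_cases h1 : w = u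
  · subst h1
    rw [lvl_inl (upd_fst_u C w v huv s' i'), Function.update_of_ne huv, hu0]
  · by_cases h2 : w = v
    · subst h2
      rw [lvl_inr (upd_fst_v C u w huv s' i'), Function.update_self]
    · rw [Function.update_of_ne h2]
      show lvl _ w = lvl C w
      unfold lvl
      rw [upd_fst_other C u v w h1 h2]

lemma Phi_upd {d n : ℕ} (C : Config (QQ d) n) (u v : Fin n) (huv : u ≠ v)
    (s' i' : Fin (d+2)) (hu0 : lvl C u = 0) :
    Phi (upd C u v s' i') + pw d (lvl C v) = Phi C + pw d i'.val := by
  unfold Phi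
  rw [upd_lvl C u v huv s' i' hu0]
  exact sum_update_aux (lvl C) v i'.val (pw d)

lemma Mz_upd {d n : ℕ} (C : Config (QQ d) n) (u v : Fin n) (huv : u ≠ v)
    (s' i' : Fin (d+2)) (hu0 : lvl C u = 0) :
    Mz (upd C u v s' i') + mw d (lvl C v) = Mz C + mw d i'.val := by
  unfold Mz
  rw [upd_lvl C u v huv s' i' hu0]
  exact sum_update_aux (lvl C) v i'.val (mw d)

lemma upd_inv {d n : ℕ} {u0 v : Fin n} (hv : v ≠ u0) {C : Config (QQ d) n}
    (h : Inv d u0 C) (s' i' : Fin (d+2)) (hi1 : 1 ≤ i'.val) (hi2 : i'.val ≤ d)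
    (hphi : Phi (upd C u0 v s' i') = target d s'.val) :
    Inv d u0 (upd C u0 v s' i') := by
  have hne : u0 ≠ v := Ne.symm hv
  constructor
  · exact ⟨s', upd_fst_u C u0 v hne s' i', hphi⟩
  · intro w hw
    by_cases h2 : w = v
    · subst h2
      exact ⟨i', upd_fst_v C u0 w hne s' i', hi2⟩
    · obtain ⟨i, hi, hid⟩ := h.agents w hw
      exact ⟨i, by rw [upd_fst_other C u0 v w hw h2]; exact hi, hid⟩
  · intro a b
    show (if _ then _ else _) = (if _ then _ else _)
    by_cases hc : (a = u0 ∧ b = v) ∨ (a = v ∧ b = u0)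
    · rw [if_pos hc, if_pos (by tauto)]
    · rw [if_neg hc, if_neg (by tauto), h.esymm a b]
  · intro w hw
    by_cases h2 : w = v
    · subst h2
      have : (upd C u0 w s' i').2 u0 w = true := by
        show (if _ then _ else _) = true
        rw [if_pos (Or.inl ⟨rfl, rfl⟩)]
      rw [this, lvl_inr (upd_fst_v C u0 w hne s' i')]
      exact ⟨fun _ => by omega, fun _ => rfl⟩
    · have : (upd C u0 v s' i').2 u0 w = C.2 u0 w := by
        show (if _ then _ else _) = _
        rw [if_neg]
        rintro (⟨-, h2'⟩ | ⟨h1', -⟩)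
        · exact h2 h2'
        · exact hv h1'.symm
      rw [this]
      have hl : lvl (upd C u0 v s' i') w = lvl C w := by
        unfold lvl; rw [upd_fst_other C u0 v w hw h2]
      rw [hl]
      exact h.edge0 w hw
  · show (if _ then _ else _) = false
    rw [if_neg, h.ediag]
    rintro (⟨-, h2'⟩ | ⟨h1', -⟩)
    · exact hv h2'.symm
    · exact hv h1'.symm
  · intro a b ha hb
    show (if _ then _ else _) = false
    rw [if_neg, h.erest a b ha hb]
    rintro (⟨h1', -⟩ | ⟨-, h2'⟩)
    · exact ha h1'
    · exact hb h2'

end NETProof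
namespace NETProof

open NET Finset

lemma pw_zero (d : ℕ) : pw d 0 = 0 := if_pos rfl
lemma pw_pos (d i : ℕ) (h : i ≠ 0) : pw d i = 2^(d-i) := if_neg h
lemma mw_zero (d : ℕ) : mw d 0 = d+1 := if_pos rfl
lemma mw_pos (d i : ℕ) (h : i ≠ 0) : mw d i = d - i := if_neg h
lemma target_zero (d : ℕ) : target d 0 = 0 := if_pos rfl
lemma target_one (d : ℕ) : target d 1 = 2^(d-1) := by
  unfold target; rw [if_neg (by omega), if_pos rfl]
lemma target_top (d : ℕ) (hd : 1 ≤ d) : target d (d+1) = 2^d := by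
  unfold target; rw [if_neg (by omega), if_neg (by omega), if_pos rfl]
lemma target_mid (d s : ℕ) (h2 : 2 ≤ s) (hle : s ≤ d) :
    target d s = 2^d - 2^(d-s) := by
  unfold target; rw [if_neg (by omega), if_neg (by omega), if_neg (by omega)]

lemma step_main {d n : ℕ} (hd : 1 ≤ d) (u0 : Fin n) {C : Config (QQ d) n}
    (h : Inv d u0 C) (u v : Fin n) :
    (P d).step C u v = C ∨
      (Inv d u0 ((P d).step C u v) ∧ Mz ((P d).step C u v) < Mz C) := by
  by_cases huv : u = v
  · left; simp [NET.step, huv]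
  by_cases hu : u = u0
  case neg =>
    left
    obtain ⟨j, hj, -⟩ := h.agents u hu
    apply step_id _ _ _ h.esymm
    rw [hj]
    rcases hCv : C.1 v with s | i <;> simp [rule]
  case pos =>
  subst hu
  have hv : v ≠ u := Ne.symm huv
  have hb1 : (1:ℕ) < d + 2 := by omega
  have hbd : d + 1 < d + 2 := by omega
  have hdd : d < d + 2 := by omega
  obtain ⟨s, hsC, hPhi⟩ := h.ctrl
  obtain ⟨i, hiC, hid⟩ := h.agents v hv
  have hlv : lvl C v = i.val := lvl_inr hiC
  have hu0lvl : lvl C u = 0 := lvl_inl hsC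
  have hbeq : (C.2 u v || C.2 v u) = C.2 u v := by
    rw [h.esymm v u, Bool.or_self]
  have hs2 : s.val < d + 2 := s.isLt
  by_cases hi0 : i.val = 0
  · -- edge to v inactive
    have hbf : C.2 u v = false := by
      cases hcb : C.2 u v with
      | false => rfl
      | true =>
        have := (h.edge0 v hv).mp hcb
        rw [hlv] at this
        omega
    by_cases hs0 : s.val = 0
    · -- case 1 : q0 meets a0
      right
      have hr : rule d (C.1 u) (C.1 v) (C.2 u v || C.2 v u)
          = (.inl ⟨1, hb1⟩, .inr ⟨1, hb1⟩, true) := by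
        rw [hsC, hiC, hbeq, hbf]
        simp only [rule]
        rw [dif_pos ⟨hs0, hi0, trivial⟩]
      rw [step_eq_upd C u v huv _ _ hr]
      have hP' := Phi_upd C u v huv ⟨1, hb1⟩ ⟨1, hb1⟩ hu0lvl
      have hM' := Mz_upd C u v huv ⟨1, hb1⟩ ⟨1, hb1⟩ hu0lvl
      simp only [Fin.val_mk] at hP' hM'
      rw [hlv, hi0, pw_zero, pw_pos d 1 one_ne_zero] at hP'
      rw [hlv, hi0, mw_zero, mw_pos d 1 one_ne_zero] at hM'
      constructor
      · refine upd_inv hv h _ _ (by simp) (by simp only [Fin.val_mk]; omega) ?_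
        rw [hs0, target_zero] at hPhi
        simp only [Fin.val_mk]
        rw [target_one]
        set a := 2^(d-1)
        omega
      · omega
    by_cases hs1 : s.val = 1
    · -- case 2 : q0' meets a0
      right
      have hr : rule d (C.1 u) (C.1 v) (C.2 u v || C.2 v u)
          = (.inl ⟨d+1, hbd⟩, .inr ⟨1, hb1⟩, true) := by
        rw [hsC, hiC, hbeq, hbf]
        simp only [rule]
        rw [dif_neg (by rintro ⟨h1, -, -⟩; omega), dif_pos ⟨hs1, hi0, trivial⟩]
      rw [step_eq_upd C u v huv _ _ hr]
      have hP' := Phi_upd C u v huv ⟨d+1, hbd⟩ ⟨1, hb1⟩ hu0lvl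
      have hM' := Mz_upd C u v huv ⟨d+1, hbd⟩ ⟨1, hb1⟩ hu0lvl
      simp only [Fin.val_mk] at hP' hM'
      rw [hlv, hi0, pw_zero, pw_pos d 1 one_ne_zero] at hP'
      rw [hlv, hi0, mw_zero, mw_pos d 1 one_ne_zero] at hM'
      constructor
      · refine upd_inv hv h _ _ (by simp) (by simp only [Fin.val_mk]; omega) ?_
        rw [hs1, target_one] at hPhi
        simp only [Fin.val_mk]
        rw [target_top d hd]
        have pe : 2^d = 2 * 2^(d-1) := by
          conv_lhs => rw [← Nat.sub_add_cancel hd]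
          rw [pow_succ]
          ring
        set a := 2^(d-1)
        omega
      · omega
    by_cases hsd : s.val = d + 1
    · -- quiet: q meets a0 : nothing happens
      left
      apply step_id _ _ _ h.esymm
      rw [hsC, hiC, hbeq, hbf]
      simp only [rule]
      rw [dif_neg (by rintro ⟨h1, -, -⟩; omega),
          dif_neg (by rintro ⟨h1, -, -⟩; omega),
          dif_neg (by rintro ⟨-, h1, -, -⟩; omega),
          dif_neg (by rintro ⟨-, h1, -, -⟩; omega)]
    · -- case 4 : q_j meets a0
      right
      have hs2d : 2 ≤ s.val := by omega
      have hsled : s.val ≤ d := by omega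
      have hr : rule d (C.1 u) (C.1 v) (C.2 u v || C.2 v u)
          = (.inl ⟨d+1, hbd⟩, .inr s, true) := by
        rw [hsC, hiC, hbeq, hbf]
        simp only [rule]
        rw [dif_neg (by rintro ⟨h1, -, -⟩; omega),
            dif_neg (by rintro ⟨h1, -, -⟩; omega),
            dif_neg (by rintro ⟨h1, -, -, -⟩; omega),
            dif_pos ⟨hs2d, hsled, hi0, trivial⟩]
      rw [step_eq_upd C u v huv _ _ hr]
      have hP' := Phi_upd C u v huv ⟨d+1, hbd⟩ s hu0lvl
      have hM' := Mz_upd C u v huv ⟨d+1, hbd⟩ s hu0lvl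
      rw [hlv, hi0, pw_zero, pw_pos d s.val (by omega)] at hP'
      rw [hlv, hi0, mw_zero, mw_pos d s.val (by omega)] at hM'
      constructor
      · refine upd_inv hv h _ _ (by omega) hsled ?_
        rw [target_mid d s.val hs2d hsled] at hPhi
        simp only [Fin.val_mk]
        rw [target_top d hd]
        have ple : 2^(d - s.val) ≤ 2^d := Nat.pow_le_pow_right (by norm_num) (by omega)
        set a := 2^(d - s.val)
        set c := 2^d
        omega
      · omega
  · -- edge to v active
    have hbt : C.2 u v = true := (h.edge0 v hv).mpr (by omega)
    by_cases hcase : s.val = d + 1 ∧ i.val + 1 ≤ d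
    · -- case 3 : q meets a_i over active edge, 1 ≤ i ≤ d-1
      right
      obtain ⟨hsd, hile⟩ := hcase
      have hr : rule d (C.1 u) (C.1 v) (C.2 u v || C.2 v u)
          = (.inl ⟨i.val+1, Nat.lt_of_le_of_lt hile hdd⟩, .inr ⟨i.val+1, Nat.lt_of_le_of_lt hile hdd⟩, true) := by
        rw [hsC, hiC, hbeq, hbt]
        simp only [rule]
        rw [dif_neg (by rintro ⟨-, h1, -⟩; omega),
            dif_neg (by rintro ⟨-, h1, -⟩; omega),
            dif_pos ⟨hsd, by omega, hile, trivial⟩]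
      rw [step_eq_upd C u v huv _ _ hr]
      have hP' := Phi_upd C u v huv ⟨i.val+1, Nat.lt_of_le_of_lt hile hdd⟩ ⟨i.val+1, Nat.lt_of_le_of_lt hile hdd⟩ hu0lvl
      have hM' := Mz_upd C u v huv ⟨i.val+1, Nat.lt_of_le_of_lt hile hdd⟩ ⟨i.val+1, Nat.lt_of_le_of_lt hile hdd⟩ hu0lvl
      simp only [Fin.val_mk] at hP' hM'
      rw [hlv, pw_pos d i.val hi0, pw_pos d (i.val+1) (by omega)] at hP'
      rw [hlv, mw_pos d i.val hi0, mw_pos d (i.val+1) (by omega)] at hM'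
      constructor
      · refine upd_inv hv h _ _ (by simp only [Fin.val_mk]; omega)
          (by simp only [Fin.val_mk]; omega) ?_
        have hPhi' : Phi C = 2^d := by rw [hPhi, hsd, target_top d hd]
        simp only [Fin.val_mk]
        rw [target_mid d (i.val+1) (by omega) (by omega)]
        have pe : 2^(d - i.val) = 2 * 2^(d - (i.val+1)) := by
          have hde : d - i.val = (d - (i.val+1)) + 1 := by omega
          rw [hde, pow_succ]
          ring
        have ple : 2^(d - (i.val+1)) ≤ 2^d := Nat.pow_le_pow_right (by norm_num) (by omega)
        set a := 2^(d - (i.val+1))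
        set b := 2^(d - i.val)
        set c := 2^d
        omega
      · omega
    · -- nothing happens
      left
      apply step_id _ _ _ h.esymm
      rw [hsC, hiC, hbeq, hbt]
      simp only [rule]
      rw [dif_neg (by rintro ⟨-, h1, -⟩; omega),
          dif_neg (by rintro ⟨-, h1, -⟩; omega),
          dif_neg (by rintro ⟨hA, -, hB, -⟩; exact hcase ⟨hA, hB⟩),
          dif_neg (by rintro ⟨-, -, h1, -⟩; omega)]

end NETProof
namespace NETProof

open NET Finset

lemma quiescent {d n : ℕ} (hd : 1 ≤ d) (u0 : Fin n) (hn : 2^d + 1 ≤ n)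
    {C : Config (QQ d) n} (h : Inv d u0 C)
    (hq : ∀ u v : Fin n, (P d).step C u v = C) :
    NET.deg C u0 = 2^d := by
  classical
  obtain ⟨s, hsC, hPhi⟩ := h.ctrl
  have hu0lvl : lvl C u0 = 0 := lvl_inl hsC
  have hb1 : (1:ℕ) < d + 2 := by omega
  have hbd : d + 1 < d + 2 := by omega
  have hs2 : s.val < d + 2 := s.isLt
  set A : Finset (Fin n) := Finset.univ.filter (fun v => lvl C v ≠ 0) with hA
  have hcard_le : A.card ≤ Phi C := by
    have h1 : A.card = ∑ _v ∈ A, 1 := by simp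
    have h2 : ∑ v ∈ A, 1 ≤ ∑ v ∈ A, pw d (lvl C v) := by
      apply Finset.sum_le_sum
      intro v hv
      rw [hA, Finset.mem_filter] at hv
      rw [pw_pos d _ hv.2]
      exact Nat.one_le_two_pow
    have h3 : ∑ v ∈ A, pw d (lvl C v) ≤ Phi C :=
      Finset.sum_le_sum_of_subset (Finset.filter_subset _ _)
    omega
  have hsval : s.val = d + 1 := by
    by_contra hne
    have hone : (1:ℕ) ≤ 2^(d - s.val) := Nat.one_le_two_pow
    have hone' : (1:ℕ) ≤ 2^d := Nat.one_le_two_pow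
    have hhalf : 2^(d-1) < 2^d := Nat.pow_lt_pow_right (by norm_num) (by omega)
    have hsub : 2^(d - s.val) ≤ 2^d := Nat.pow_le_pow_right (by norm_num) (by omega)
    have htlt : target d s.val + 1 ≤ 2^d := by
      by_cases hs0 : s.val = 0
      · rw [hs0, target_zero]; omega
      by_cases hs1 : s.val = 1
      · rw [hs1, target_one]; omega
      · rw [target_mid d s.val (by omega) (by omega)]; omega
    have hAsmall : A.card < n - 1 := by omega
    have hex : ∃ v, v ≠ u0 ∧ lvl C v = 0 := by
      by_contra hno
      push_neg at hno
      have hsub2 : Finset.univ.erase u0 ⊆ A := by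
        intro w hw
        rw [Finset.mem_erase] at hw
        rw [hA, Finset.mem_filter]
        exact ⟨Finset.mem_univ w, hno w hw.1⟩
      have := Finset.card_le_card hsub2
      rw [Finset.card_erase_of_mem (Finset.mem_univ u0), Finset.card_univ,
        Fintype.card_fin] at this
      omega
    obtain ⟨v, hv, hlv0⟩ := hex
    obtain ⟨i, hiC, -⟩ := h.agents v hv
    have hi0 : i.val = 0 := by rw [lvl_inr hiC] at hlv0; exact hlv0
    have hbf : C.2 u0 v = false := by
      cases hcb : C.2 u0 v with
      | false => rfl
      | true => exact absurd ((h.edge0 v hv).mp hcb) (by rw [lvl_inr hiC, hi0]; simp)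
    have hbeq : (C.2 u0 v || C.2 v u0) = false := by
      rw [h.esymm v u0, Bool.or_self, hbf]
    obtain ⟨s', i', hi'1, hr⟩ :
        ∃ s' i' : Fin (d+2), 1 ≤ i'.val ∧
          rule d (C.1 u0) (C.1 v) (C.2 u0 v || C.2 v u0)
            = (.inl s', .inr i', true) := by
      by_cases hs0 : s.val = 0
      · refine ⟨⟨1, hb1⟩, ⟨1, hb1⟩, by simp, ?_⟩
        rw [hsC, hiC, hbeq]
        simp only [rule]
        rw [dif_pos ⟨hs0, hi0, trivial⟩]
      by_cases hs1 : s.val = 1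
      · refine ⟨⟨d+1, hbd⟩, ⟨1, hb1⟩, by simp, ?_⟩
        rw [hsC, hiC, hbeq]
        simp only [rule]
        rw [dif_neg (by rintro ⟨h1, -, -⟩; omega), dif_pos ⟨hs1, hi0, trivial⟩]
      · refine ⟨⟨d+1, hbd⟩, s, by omega, ?_⟩
        rw [hsC, hiC, hbeq]
        simp only [rule]
        rw [dif_neg (by rintro ⟨h1, -, -⟩; omega),
            dif_neg (by rintro ⟨h1, -, -⟩; omega),
            dif_neg (by rintro ⟨h1, -, -, -⟩; omega),
            dif_pos ⟨by omega, by omega, hi0, trivial⟩]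
    have hupd : upd C u0 v s' i' = C := by
      rw [← step_eq_upd C u0 v (Ne.symm hv) s' i' hr]
      exact hq u0 v
    have := congrArg (fun X => X.1 v) hupd
    rw [upd_fst_v C u0 v (Ne.symm hv) s' i', hiC] at this
    have : i' = i := Sum.inr.injEq .. ▸ this
    omega
  have hall : ∀ v : Fin n, lvl C v = 0 ∨ lvl C v = d := by
    intro v
    by_cases hvu : v = u0
    · left; rw [hvu, hu0lvl]
    obtain ⟨i, hiC, hid⟩ := h.agents v hvu
    rw [lvl_inr hiC]
    by_contra hmid
    push_neg at hmid
    have hi1 : 1 ≤ i.val := by omega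
    have hile : i.val + 1 ≤ d := by omega
    have hbt : C.2 u0 v = true :=
      (h.edge0 v hvu).mpr (by rw [lvl_inr hiC]; omega)
    have hbeq : (C.2 u0 v || C.2 v u0) = true := by
      rw [h.esymm v u0, Bool.or_self, hbt]
    have hdd : d < d + 2 := by omega
    have hr : rule d (C.1 u0) (C.1 v) (C.2 u0 v || C.2 v u0)
        = (.inl ⟨i.val+1, Nat.lt_of_le_of_lt hile hdd⟩,
           .inr ⟨i.val+1, Nat.lt_of_le_of_lt hile hdd⟩, true) := by
      rw [hsC, hiC, hbeq]
      simp only [rule]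
      rw [dif_neg (by rintro ⟨-, h1, -⟩; omega),
          dif_neg (by rintro ⟨-, h1, -⟩; omega),
          dif_pos ⟨hsval, hi1, hile, trivial⟩]
    have hupd : upd C u0 v ⟨i.val+1, Nat.lt_of_le_of_lt hile hdd⟩
        ⟨i.val+1, Nat.lt_of_le_of_lt hile hdd⟩ = C := by
      rw [← step_eq_upd C u0 v (Ne.symm hvu) _ _ hr]
      exact hq u0 v
    have := congrArg (fun X => X.1 v) hupd
    rw [upd_fst_v C u0 v (Ne.symm hvu), hiC] at this
    have h2 : (⟨i.val+1, Nat.lt_of_le_of_lt hile hdd⟩ : Fin (d+2)) = i :=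
      Sum.inr.injEq .. ▸ this
    have h3 := congrArg Fin.val h2
    simp only [Fin.val_mk] at h3
    omega
  have hPhiA : Phi C = A.card := by
    have h1 : ∑ v ∈ A, pw d (lvl C v) = ∑ v : Fin n, pw d (lvl C v) := by
      rw [hA]
      apply Finset.sum_filter_of_ne
      intro v _ hnz
      intro h0
      rw [h0, pw_zero] at hnz
      exact hnz rfl
    have h2 : ∀ v ∈ A, pw d (lvl C v) = 1 := by
      intro v hv
      rw [hA, Finset.mem_filter] at hv
      rcases hall v with h0 | hdv
      · exact absurd h0 hv.2
      · rw [hdv, pw_pos d d (by omega), Nat.sub_self, pow_zero]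
    rw [Phi, ← h1, Finset.sum_congr rfl h2]
    simp
  have hAcard : A.card = 2^d := by
    rw [hsval, target_top d hd] at hPhi
    omega
  have hfilter : ∀ w : Fin n, NET.adj C u0 w ↔ lvl C w ≠ 0 := by
    intro w
    constructor
    · rintro ⟨hne, hor | hor⟩
      · exact (h.edge0 w (Ne.symm hne)).mp hor
      · rw [h.esymm w u0] at hor
        exact (h.edge0 w (Ne.symm hne)).mp hor
    · intro hl
      have hwu : w ≠ u0 := by
        intro he
        rw [he, hu0lvl] at hl
        exact hl rfl
      exact ⟨Ne.symm hwu, Or.inl ((h.edge0 w hwu).mpr hl)⟩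
  rw [NET.deg]
  have hset : (Finset.univ.filter (fun v => NET.adj C u0 v)) = A := by
    ext w
    rw [hA]
    simp only [Finset.mem_filter, Finset.mem_univ, true_and]
    exact hfilter w
  rw [hset, hAcard]

end NETProof
namespace NETProof

open NET Finset

lemma run_lemma {d n : ℕ} (hd : 1 ≤ d) (u0 : Fin n) (hn : 2^d + 1 ≤ n)
    (C0 : Config (QQ d) n) (hC0 : Inv d u0 C0)
    (sched : ℕ → Fin n × Fin n) (hfair : NET.Fair sched) :
    ∃ t : ℕ, ∀ t', t ≤ t' → NET.deg ((P d).run C0 sched t') u0 = 2^d := by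
  classical
  set R : ℕ → Config (QQ d) n := (P d).run C0 sched with hR
  have hInv : ∀ t, Inv d u0 (R t) := by
    intro t
    induction t with
    | zero => exact hC0
    | succ t ih =>
      rcases step_main hd u0 ih (sched t).1 (sched t).2 with he | ⟨hi, -⟩
      · show Inv d u0 ((P d).step (R t) (sched t).1 (sched t).2)
        rw [he]; exact ih
      · exact hi
  have hstep : ∀ t, R (t+1) = R t ∨ Mz (R (t+1)) < Mz (R t) := by
    intro t
    rcases step_main hd u0 (hInv t) (sched t).1 (sched t).2 with he | ⟨-, hm⟩
    · left; exact he
    · right; exact hm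
  set f : ℕ → ℕ := fun t => Mz (R t) with hf
  have hmono : ∀ t, f (t+1) ≤ f t := by
    intro t
    rcases hstep t with he | hm
    · exact le_of_eq (congrArg Mz he)
    · exact le_of_lt hm
  have hle : ∀ s k, f (s + k) ≤ f s := by
    intro s k
    induction k with
    | zero => exact le_rfl
    | succ k ih => exact le_trans (by rw [← Nat.add_assoc]; exact hmono (s+k)) ih
  obtain ⟨t₀, ht₀⟩ : ∃ t₀, f t₀ = sInf (Set.range f) :=
    Nat.sInf_mem (Set.range_nonempty f)
  have hconst : ∀ k, R (t₀ + k) = R t₀ := by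
    intro k
    induction k with
    | zero => rfl
    | succ k ih =>
      have h1 : f (t₀ + k) = f t₀ := by
        have ha := hle t₀ k
        have hb : sInf (Set.range f) ≤ f (t₀ + k) := Nat.sInf_le ⟨t₀ + k, rfl⟩
        omega
      rcases hstep (t₀ + k) with he | hm
      · rw [show t₀ + (k+1) = (t₀ + k) + 1 from rfl, he, ih]
      · exfalso
        have hb : sInf (Set.range f) ≤ f (t₀ + k + 1) := Nat.sInf_le ⟨t₀ + k + 1, rfl⟩
        have : f (t₀ + k + 1) < f (t₀ + k) := hm
        omega
  have hconst' : ∀ t, t₀ ≤ t → R t = R t₀ := by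
    intro t ht
    have : t = t₀ + (t - t₀) := by omega
    rw [this]
    exact hconst (t - t₀)
  have hq : ∀ u v : Fin n, (P d).step (R t₀) u v = R t₀ := by
    intro u v
    by_cases huv : u = v
    · simp [NET.step, huv]
    · obtain ⟨k, hk, hsk⟩ := hfair (u, v) huv t₀
      have h1 : R (k+1) = (P d).step (R k) u v := by
        show (P d).step (R k) (sched k).1 (sched k).2 = _
        rw [hsk]
      rw [hconst' k hk] at h1
      rw [← h1]
      exact hconst' (k+1) (by omega)
  refine ⟨t₀, fun t' ht' => ?_⟩
  rw [hconst' t' ht']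
  exact quiescent hd u0 hn (hInv t₀) hq

end NETProof

/-- For every fixed `d ≥ 1` there is a protocol with exactly `2(d+2)` states such that,
starting from a designated node `u` in state `q₀`, all other nodes in state `a₀`, and all
edges inactive, under every fair schedule the execution stabilizes with `u` having
exactly `2^d` active neighbors. -/
theorem degree_two_pow_with_linear_states (d : ℕ) (hd : 1 ≤ d) :
    ∃ (Q : Type) (_ : Fintype Q) (P : NET Q) (q₀ a₀ : Q),
      Fintype.card Q = 2 * (d + 2) ∧
      ∀ (n : ℕ) (hn : 2 ^ d + 1 ≤ n),
        ∀ sched : ℕ → Fin n × Fin n, NET.Fair sched →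
          ∃ t : ℕ, ∀ t', t ≤ t' →
            NET.deg
              (P.run
                ⟨fun w => if w = (⟨0, Nat.lt_of_lt_of_le (Nat.succ_pos _) hn⟩ : Fin n)
                    then q₀ else a₀,
                  fun _ _ => false⟩
                sched t')
              (⟨0, Nat.lt_of_lt_of_le (Nat.succ_pos _) hn⟩ : Fin n) = 2 ^ d := by
  classical
  refine ⟨NETProof.QQ d, inferInstance, NETProof.P d,
    Sum.inl ⟨0, by omega⟩, Sum.inr ⟨0, by omega⟩, ?_, ?_⟩
  · simp [NETProof.QQ]
    omega
  · intro n hn sched hfair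
    set u0 : Fin n := ⟨0, Nat.lt_of_lt_of_le (Nat.succ_pos _) hn⟩ with hu0
    set C0 : NET.Config (NETProof.QQ d) n :=
      ⟨fun w => if w = u0 then Sum.inl ⟨0, by omega⟩ else Sum.inr ⟨0, by omega⟩,
       fun _ _ => false⟩ with hC0
    have hlvl0 : ∀ v, NETProof.lvl C0 v = 0 := by
      intro v
      by_cases hv : v = u0
      · exact NETProof.lvl_inl (s := ⟨0, by omega⟩) (by rw [hC0]; simp [hv])
      · have : C0.1 v = Sum.inr ⟨0, by omega⟩ := by rw [hC0]; simp [hv]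
        rw [NETProof.lvl_inr this]
    have hInv0 : NETProof.Inv d u0 C0 := by
      constructor
      · refine ⟨⟨0, by omega⟩, by rw [hC0]; simp, ?_⟩
        have : NETProof.Phi C0 = 0 := by
          rw [NETProof.Phi]
          apply Finset.sum_eq_zero
          intro v _
          rw [hlvl0 v, NETProof.pw_zero]
        rw [this]
        simp only [Fin.val_mk]
        rw [NETProof.target_zero]
      · intro v hv
        exact ⟨⟨0, by omega⟩, by rw [hC0]; simp [hv], by simp only [Fin.val_mk]; omega⟩
      · intro u v; rfl
      · intro v hv
        constructor
        · intro hcontra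
          exact absurd hcontra (by rw [hC0]; simp)
        · intro hl
          exact absurd (hlvl0 v) hl
      · rfl
      · intro u v _ _; rfl
    exact NETProof.run_lemma hd u0 hn C0 hInv0 sched hfair
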